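/- In the power allocation game with α_i > 0 for all i, define F_i(p) = λ_i − α_i·W·g_i(p)/(1 + g_i(p)·p_i), the normalized coefficients â_{i,ℓ} = a_{i,ℓ}/a_{i,i} and σ̂_i² = σ²/a_{i,i}, and for two profiles p, p′ ∈ P set ψ_i = sqrt(∑_{ℓ=1}^M â_{i,ℓ}·p′_ℓ + σ̂_i²)·sqrt(∑_{ℓ=1}^M â_{i,ℓ}·p_ℓ + σ̂_i²) and e_i = (p_i − p′_i)/ψ_i. Define the M×M matrix Q by Q_{p,p} = α_p·W and, for p ≠ q, Q_{p,q} = −α_p·W·(a_{p,q}/a_{q,q})·(1 + σ^{−2}·∑_{i=1}^M a_{q,i}·p_i^max). Then for every i ∈ {1,…,M} and all p, p′ ∈ P, (p_i − p′_i)·(F_i(p) − F_i(p′)) ≥ |e_i| · ∑_{i′=1}^M Q_{i,i′}·|e_{i′}|. -/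

import Mathlib

open Finset

/-- Equivalent channel gain of player `i` under power profile `p`:
`g_i(p) = a_{i,i} / (∑_{ℓ ≠ i} a_{i,ℓ}·p_ℓ + σ²)`. -/
noncomputable def gain (M : ℕ) (σ2 : ℝ) (a : Fin M → Fin M → ℝ)
    (p : Fin M → ℝ) (i : Fin M) : ℝ :=
  a i i / ((∑ ℓ ∈ Finset.univ.erase i, a i ℓ * p ℓ) + σ2)


/-- The joint strategy set `P = ∏_{i=1}^M [0, p_i^max]`. -/
def stratBox (M : ℕ) (pmax : Fin M → ℝ) : Set (Fin M → ℝ) :=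
  {p | ∀ i, p i ∈ Set.Icc (0 : ℝ) (pmax i)}

/-- `F_i(p) = λ_i − α_i·W·g_i(p)/(1 + g_i(p)·p_i)`. -/
noncomputable def Fmap (M : ℕ) (W σ2 : ℝ) (α lam : Fin M → ℝ)
    (a : Fin M → Fin M → ℝ) (p : Fin M → ℝ) (i : Fin M) : ℝ :=
  lam i - α i * W * gain M σ2 a p i / (1 + gain M σ2 a p i * p i)

/-- The matrix `Q` of Theorem 1: `Q_{p,p} = α_p·W` and, for `p ≠ q`,
`Q_{p,q} = −α_p·W·(a_{p,q}/a_{q,q})·(1 + σ⁻²·∑_i a_{q,i}·p_i^max)`. -/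
noncomputable def Qmat (M : ℕ) (W σ2 : ℝ) (α pmax : Fin M → ℝ)
    (a : Fin M → Fin M → ℝ) : Matrix (Fin M) (Fin M) ℝ :=
  fun p q =>
    if p = q then α p * W
    else -(α p * W * (a p q / a q q) * (1 + σ2⁻¹ * ∑ i, a q i * pmax i))

/-- `ψ_i = sqrt(∑_ℓ â_{i,ℓ}·p'_ℓ + σ̂_i²) · sqrt(∑_ℓ â_{i,ℓ}·p_ℓ + σ̂_i²)`
where `â_{i,ℓ} = a_{i,ℓ}/a_{i,i}` and `σ̂_i² = σ²/a_{i,i}`. -/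
noncomputable def psi (M : ℕ) (σ2 : ℝ) (a : Fin M → Fin M → ℝ)
    (p p' : Fin M → ℝ) (i : Fin M) : ℝ :=
  Real.sqrt ((∑ ℓ, (a i ℓ / a i i) * p' ℓ) + σ2 / a i i) *
    Real.sqrt ((∑ ℓ, (a i ℓ / a i i) * p ℓ) + σ2 / a i i)

/-- `e_i = (p_i − p'_i)/ψ_i`. -/
noncomputable def evec (M : ℕ) (σ2 : ℝ) (a : Fin M → Fin M → ℝ)
    (p p' : Fin M → ℝ) (i : Fin M) : ℝ :=
  (p i - p' i) / psi M σ2 a p p' i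

set_option maxHeartbeats 1000000 in
/-- **key inequality chain, Eqs. (35)-(37) in Appendix C.**
For every `i` and all `p, p' ∈ P`,
`(p_i − p'_i)·(F_i(p) − F_i(p')) ≥ |e_i|·∑_{i'} Q_{i,i'}·|e_{i'}|`. -/
theorem Fmap_diff_ge_Qform (M : ℕ) (hM : 1 ≤ M) (W σ2 : ℝ)
    (hW : 0 < W) (hσ2 : 0 < σ2) (α lam pmax : Fin M → ℝ)
    (a : Fin M → Fin M → ℝ)
    (hα : ∀ i, 0 < α i) (hlam : ∀ i, 0 ≤ lam i) (hpmax : ∀ i, 0 < pmax i)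
    (ha : ∀ i ℓ, 0 ≤ a i ℓ) (haii : ∀ i, 0 < a i i) :
    ∀ i : Fin M, ∀ p ∈ stratBox M pmax, ∀ p' ∈ stratBox M pmax,
      (p i - p' i) * (Fmap M W σ2 α lam a p i - Fmap M W σ2 α lam a p' i) ≥
        |evec M σ2 a p p' i| *
          ∑ i', Qmat M W σ2 α pmax a i i' * |evec M σ2 a p p' i'| := by

  intro i p hp p' hp'
  have hαW : 0 < α i * W := mul_pos (hα i) hW
  -- lower and upper bounds on the normalized interference sums
  have hTlo : ∀ j : Fin M, ∀ q ∈ stratBox M pmax,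
      σ2 / a j j ≤ (∑ ℓ, (a j ℓ / a j j) * q ℓ) + σ2 / a j j := by
    intro j q hq
    have h0 : 0 ≤ ∑ ℓ, (a j ℓ / a j j) * q ℓ :=
      Finset.sum_nonneg fun ℓ _ => mul_nonneg (div_nonneg (ha j ℓ) (haii j).le) (hq ℓ).1
    linarith
  have hThi : ∀ j : Fin M, ∀ q ∈ stratBox M pmax,
      (∑ ℓ, (a j ℓ / a j j) * q ℓ) + σ2 / a j j
        ≤ ((∑ k, a j k * pmax k) + σ2) / a j j := by
    intro j q hq
    rw [add_div, Finset.sum_div]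
    apply add_le_add_left
    apply Finset.sum_le_sum
    intro ℓ _
    rw [div_mul_eq_mul_div]
    exact (div_le_div_iff_of_pos_right (haii j)).mpr
      (mul_le_mul_of_nonneg_left (hq ℓ).2 (ha j ℓ))
  have hσa : ∀ j : Fin M, 0 < σ2 / a j j := fun j => div_pos hσ2 (haii j)
  set ψ : Fin M → ℝ := psi M σ2 a p p' with hψdef
  set e : Fin M → ℝ := evec M σ2 a p p' with hedef
  have hψlo : ∀ j : Fin M, σ2 / a j j ≤ ψ j := by
    intro j
    have h1 : Real.sqrt (σ2 / a j j) ≤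
        Real.sqrt ((∑ ℓ, (a j ℓ / a j j) * p' ℓ) + σ2 / a j j) :=
      Real.sqrt_le_sqrt (hTlo j p' hp')
    have h2 : Real.sqrt (σ2 / a j j) ≤
        Real.sqrt ((∑ ℓ, (a j ℓ / a j j) * p ℓ) + σ2 / a j j) :=
      Real.sqrt_le_sqrt (hTlo j p hp)
    have h3 : Real.sqrt (σ2 / a j j) * Real.sqrt (σ2 / a j j) = σ2 / a j j :=
      Real.mul_self_sqrt (hσa j).le
    have h4 : 0 ≤ Real.sqrt (σ2 / a j j) := Real.sqrt_nonneg _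
    calc σ2 / a j j = Real.sqrt (σ2 / a j j) * Real.sqrt (σ2 / a j j) := h3.symm
      _ ≤ ψ j := by
          rw [hψdef]
          unfold psi
          exact mul_le_mul h1 h2 h4 (Real.sqrt_nonneg _)
  have hψpos : ∀ j : Fin M, 0 < ψ j := fun j => lt_of_lt_of_le (hσa j) (hψlo j)
  have hψhi : ∀ j : Fin M, ψ j ≤ ((∑ k, a j k * pmax k) + σ2) / a j j := by
    intro j
    set U : ℝ := ((∑ k, a j k * pmax k) + σ2) / a j j with hU
    have hU0 : 0 ≤ U := by
      apply div_nonneg _ (haii j).le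
      have : 0 ≤ ∑ k, a j k * pmax k :=
        Finset.sum_nonneg fun k _ => mul_nonneg (ha j k) (hpmax k).le
      linarith
    have h1 : Real.sqrt ((∑ ℓ, (a j ℓ / a j j) * p' ℓ) + σ2 / a j j)
        ≤ Real.sqrt U := Real.sqrt_le_sqrt (hThi j p' hp')
    have h2 : Real.sqrt ((∑ ℓ, (a j ℓ / a j j) * p ℓ) + σ2 / a j j)
        ≤ Real.sqrt U := Real.sqrt_le_sqrt (hThi j p hp)
    calc ψ j ≤ Real.sqrt U * Real.sqrt U := by
          rw [hψdef]
          unfold psi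
          exact mul_le_mul h1 h2 (Real.sqrt_nonneg _) (Real.sqrt_nonneg _)
      _ = U := Real.mul_self_sqrt hU0
  have hψsq : ψ i * ψ i =
      ((∑ ℓ, (a i ℓ / a i i) * p' ℓ) + σ2 / a i i) *
        ((∑ ℓ, (a i ℓ / a i i) * p ℓ) + σ2 / a i i) := by
    have hA : 0 ≤ (∑ ℓ, (a i ℓ / a i i) * p' ℓ) + σ2 / a i i :=
      le_trans (hσa i).le (hTlo i p' hp')
    have hB : 0 ≤ (∑ ℓ, (a i ℓ / a i i) * p ℓ) + σ2 / a i i :=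
      le_trans (hσa i).le (hTlo i p hp)
    rw [hψdef]
    unfold psi
    rw [show ∀ x y : ℝ, (x * y) * (x * y) = (x * x) * (y * y) from fun x y => by ring]
    rw [Real.mul_self_sqrt hA, Real.mul_self_sqrt hB]
  have he : ∀ j : Fin M, p j - p' j = e j * ψ j := by
    intro j
    rw [hedef]
    unfold evec
    rw [← hψdef]
    rw [div_mul_cancel₀ _ (hψpos j).ne']
  -- Closed form for Fmap
  have hF : ∀ q ∈ stratBox M pmax, Fmap M W σ2 α lam a q i
      = lam i - α i * W / ((∑ ℓ, (a i ℓ / a i i) * q ℓ) + σ2 / a i i) := by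
    intro q hq
    have hD : 0 ≤ ∑ ℓ ∈ Finset.univ.erase i, a i ℓ * q ℓ :=
      Finset.sum_nonneg fun ℓ _ => mul_nonneg (ha i ℓ) (hq ℓ).1
    have hd1 : 0 < (∑ ℓ ∈ Finset.univ.erase i, a i ℓ * q ℓ) + σ2 := by linarith
    have hqi : 0 ≤ q i := (hq i).1
    have hsum : (∑ ℓ, (a i ℓ / a i i) * q ℓ) + σ2 / a i i
        = ((∑ ℓ ∈ Finset.univ.erase i, a i ℓ * q ℓ) + a i i * q i + σ2) / a i i := by
      have h1 : (∑ ℓ, (a i ℓ / a i i) * q ℓ) = (∑ ℓ, a i ℓ * q ℓ) / a i i := by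
        rw [Finset.sum_div]
        exact Finset.sum_congr rfl fun ℓ _ => by ring
      have h2 : (∑ ℓ, a i ℓ * q ℓ)
          = (∑ ℓ ∈ Finset.univ.erase i, a i ℓ * q ℓ) + a i i * q i :=
        (Finset.sum_erase_add _ _ (Finset.mem_univ i)).symm
      rw [h1, h2, ← add_div]
    have hd2 : (0:ℝ) < 1 + a i i / ((∑ ℓ ∈ Finset.univ.erase i, a i ℓ * q ℓ) + σ2) * q i :=
      add_pos_of_pos_of_nonneg one_pos
        (mul_nonneg (div_nonneg (haii i).le hd1.le) hqi)
    unfold Fmap gain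
    rw [hsum]
    have hd3 : (0:ℝ) < (∑ ℓ ∈ Finset.univ.erase i, a i ℓ * q ℓ) + a i i * q i + σ2 := by
      have : 0 ≤ a i i * q i := mul_nonneg (haii i).le hqi
      linarith
    generalize hDdef : (∑ ℓ ∈ Finset.univ.erase i, a i ℓ * q ℓ) = D at hd1 hd2 hd3 ⊢
    have hx : a i i * q i + D + σ2 ≠ 0 := by linarith
    field_simp [hd1.ne', hd2.ne', hd3.ne', hx, (haii i).ne']
    have hy : (a i i * q i + D + σ2) * (a i i * q i + D + σ2)⁻¹ = 1 := mul_inv_cancel₀ hx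
    linear_combination (-(α i * W * a i i)) * hy
  set Sp : ℝ := (∑ ℓ, (a i ℓ / a i i) * p ℓ) + σ2 / a i i with hSp
  set Sp' : ℝ := (∑ ℓ, (a i ℓ / a i i) * p' ℓ) + σ2 / a i i with hSp'
  have hSppos : 0 < Sp := lt_of_lt_of_le (hσa i) (hTlo i p hp)
  have hSp'pos : 0 < Sp' := lt_of_lt_of_le (hσa i) (hTlo i p' hp')
  -- The LHS as a sum
  have hLHS : (p i - p' i) * (Fmap M W σ2 α lam a p i - Fmap M W σ2 α lam a p' i)
      = ∑ ℓ, α i * W * (a i ℓ / a i i) * (e i * e ℓ) * (ψ ℓ / ψ i) := by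
    rw [hF p hp, hF p' hp']
    have h1 : lam i - α i * W / Sp - (lam i - α i * W / Sp')
        = α i * W * (Sp - Sp') / (Sp' * Sp) := by
      field_simp
      ring
    rw [h1]
    have h2 : Sp - Sp' = ∑ ℓ, (a i ℓ / a i i) * (e ℓ * ψ ℓ) := by
      rw [hSp, hSp']
      rw [add_sub_add_right_eq_sub, ← Finset.sum_sub_distrib]
      exact Finset.sum_congr rfl fun ℓ _ => by rw [← mul_sub, he ℓ]
    have h3 : Sp' * Sp = ψ i * ψ i := hψsq.symm
    rw [h2, h3, he i]
    rw [show (e i * ψ i) * (α i * W * (∑ ℓ, (a i ℓ / a i i) * (e ℓ * ψ ℓ)) / (ψ i * ψ i))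
        = (e i * ψ i * (α i * W) / (ψ i * ψ i)) * ∑ ℓ, (a i ℓ / a i i) * (e ℓ * ψ ℓ)
        from by ring]
    rw [Finset.mul_sum]
    refine Finset.sum_congr rfl fun ℓ _ => ?_
    have hψi := (hψpos i).ne'
    field_simp [hψi, (haii i).ne']
  rw [ge_iff_le, hLHS, Finset.mul_sum]
  apply Finset.sum_le_sum
  intro ℓ _
  rcases eq_or_ne i ℓ with rfl | hne
  · have hQ : Qmat M W σ2 α pmax a i i = α i * W := by
      unfold Qmat
      rw [if_pos rfl]
    rw [hQ]
    have h1 : |e i| * |e i| = e i * e i := abs_mul_abs_self _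
    have h2 : a i i / a i i = 1 := div_self (haii i).ne'
    have h3 : ψ i / ψ i = 1 := div_self (hψpos i).ne'
    rw [h2, h3]
    nlinarith [abs_nonneg (e i)]
  · have hQ : Qmat M W σ2 α pmax a i ℓ
        = -(α i * W * (a i ℓ / a ℓ ℓ) * (1 + σ2⁻¹ * ∑ k, a ℓ k * pmax k)) := by
      unfold Qmat
      rw [if_neg hne]
    rw [hQ]
    set c : ℝ := 1 + σ2⁻¹ * ∑ k, a ℓ k * pmax k with hc
    have hc0 : 0 ≤ c := by
      rw [hc]
      have h1 : 0 ≤ ∑ k, a ℓ k * pmax k :=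
        Finset.sum_nonneg fun k _ => mul_nonneg (ha ℓ k) (hpmax k).le
      have h2 : 0 ≤ σ2⁻¹ * ∑ k, a ℓ k * pmax k :=
        mul_nonneg (inv_nonneg.mpr hσ2.le) h1
      linarith
    -- the key bound
    have hkey : (a i ℓ / a i i) * (ψ ℓ / ψ i) ≤ (a i ℓ / a ℓ ℓ) * c := by
      have h1 : ψ ℓ / ψ i ≤ (((∑ k, a ℓ k * pmax k) + σ2) / a ℓ ℓ) / (σ2 / a i i) :=
        div_le_div₀ (by
            apply div_nonneg _ (haii ℓ).le
            have : 0 ≤ ∑ k, a ℓ k * pmax k :=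
              Finset.sum_nonneg fun k _ => mul_nonneg (ha ℓ k) (hpmax k).le
            linarith)
          (hψhi ℓ) (hσa i) (hψlo i)
      have h2 : (a i ℓ / a i i) * (ψ ℓ / ψ i)
          ≤ (a i ℓ / a i i) * ((((∑ k, a ℓ k * pmax k) + σ2) / a ℓ ℓ) / (σ2 / a i i)) :=
        mul_le_mul_of_nonneg_left h1 (div_nonneg (ha i ℓ) (haii i).le)
      have h3 : (a i ℓ / a i i) * ((((∑ k, a ℓ k * pmax k) + σ2) / a ℓ ℓ) / (σ2 / a i i))
          = (a i ℓ / a ℓ ℓ) * c := by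
        rw [hc]
        field_simp [(haii i).ne', (haii ℓ).ne', hσ2.ne']
        ring
      linarith
    have hk0 : 0 ≤ (a i ℓ / a i i) * (ψ ℓ / ψ i) :=
      mul_nonneg (div_nonneg (ha i ℓ) (haii i).le)
        (div_nonneg (hψpos ℓ).le (hψpos i).le)
    have habs : -(|e i| * |e ℓ|) ≤ e i * e ℓ := by
      rw [← abs_mul]
      exact neg_abs_le _
    have hae : 0 ≤ |e i| * |e ℓ| := mul_nonneg (abs_nonneg _) (abs_nonneg _)
    nlinarith [mul_le_mul_of_nonneg_left hkey hαW.le,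
      mul_nonneg (mul_nonneg hαW.le hk0) (sub_nonneg.mpr habs)]
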